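/- Let A, B be m×n real matrices with rank(B) = k, and let Â be a best rank-k approximation of A in Frobenius norm (e.g., from the SVD truncation). Then ‖Â − B‖_F² ≤ 5k·‖A − B‖₂², where ‖·‖₂ is the spectral norm. -/

import Mathlib

/-- Euclidean norm of a vector. -/
noncomputable def enorm {n : ℕ} (v : Fin n → ℝ) : ℝ := Real.sqrt (∑ i, v i ^ 2)

/-- Spectral (operator) norm of a matrix. -/
noncomputable def specNorm {m n : ℕ} (M : Matrix (Fin m) (Fin n) ℝ) : ℝ :=
  sSup ((fun x : Fin n → ℝ => _root_.enorm (M.mulVec x)) '' {x | _root_.enorm x = 1})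

noncomputable section
open Module Submodule Finset Matrix
open scoped RealInnerProductSpace

abbrev Euc (n : ℕ) := EuclideanSpace ℝ (Fin n)

def toE {n : ℕ} (v : Fin n → ℝ) : Euc n := (WithLp.equiv 2 _).symm v
def fromE {n : ℕ} (x : Euc n) : Fin n → ℝ := (WithLp.equiv 2 _) x

@[simp] lemma toE_apply {n : ℕ} (v : Fin n → ℝ) (i : Fin n) : toE v i = v i := rfl
@[simp] lemma fromE_apply {n : ℕ} (x : Euc n) (i : Fin n) : fromE x i = x i := rfl
@[simp] lemma toE_fromE {n : ℕ} (x : Euc n) : toE (fromE x) = x := rfl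
@[simp] lemma fromE_toE {n : ℕ} (v : Fin n → ℝ) : fromE (toE v) = v := rfl
lemma toE_add {n : ℕ} (v w : Fin n → ℝ) : toE (v + w) = toE v + toE w := rfl
lemma toE_sub {n : ℕ} (v w : Fin n → ℝ) : toE (v - w) = toE v - toE w := rfl
lemma toE_smul {n : ℕ} (c : ℝ) (v : Fin n → ℝ) : toE (c • v) = c • toE v := rfl
lemma toE_zero {n : ℕ} : toE (0 : Fin n → ℝ) = 0 := rfl
lemma toE_neg {n : ℕ} (v : Fin n → ℝ) : toE (-v) = - toE v := rfl

lemma normsq_toE {n : ℕ} (v : Fin n → ℝ) : ‖toE v‖ ^ 2 = ∑ i, v i ^ 2 := by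
  rw [EuclideanSpace.norm_eq]
  rw [Real.sq_sqrt (by positivity)]
  simp [Real.norm_eq_abs, sq_abs]

lemma norm_toE {n : ℕ} (v : Fin n → ℝ) : ‖toE v‖ = Real.sqrt (∑ i, v i ^ 2) := by
  rw [EuclideanSpace.norm_eq]; simp [Real.norm_eq_abs, sq_abs]

lemma inner_toE {n : ℕ} (v w : Fin n → ℝ) : ⟪toE v, toE w⟫ = ∑ i, v i * w i := by
  simp [PiLp.inner_apply, RCLike.inner_apply, toE]
  exact Finset.sum_congr rfl fun i _ => mul_comm _ _

lemma enorm_eq {n : ℕ} (v : Fin n → ℝ) : _root_.enorm v = ‖toE v‖ := (norm_toE v).symm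


lemma specNorm_nonneg {m n : ℕ} (M : Matrix (Fin m) (Fin n) ℝ) : 0 ≤ specNorm M := by
  apply Real.sSup_nonneg
  rintro y ⟨x, -, rfl⟩
  exact Real.sqrt_nonneg _

lemma cauchy_bound {m n : ℕ} (M : Matrix (Fin m) (Fin n) ℝ) (x : Fin n → ℝ) :
    ‖toE (M.mulVec x)‖ ≤ Real.sqrt (∑ i, ∑ j, M i j ^ 2) * ‖toE x‖ := by
  have h1 : ‖toE (M.mulVec x)‖ ^ 2 ≤ (∑ i, ∑ j, M i j ^ 2) * ‖toE x‖ ^ 2 := by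
    rw [normsq_toE]
    have hrow : ∀ i, (M.mulVec x i) ^ 2 ≤ (∑ j, M i j ^ 2) * ‖toE x‖ ^ 2 := by
      intro i
      have : M.mulVec x i = ⟪toE (M i), toE x⟫ := by
        rw [inner_toE]; rfl
      rw [this]
      have := abs_real_inner_le_norm (toE (M i)) (toE x)
      calc ⟪toE (M i), toE x⟫ ^ 2 = |⟪toE (M i), toE x⟫| ^ 2 := (sq_abs _).symm
        _ ≤ (‖toE (M i)‖ * ‖toE x‖) ^ 2 := by
            apply pow_le_pow_left₀ (abs_nonneg _) this
        _ = ‖toE (M i)‖ ^ 2 * ‖toE x‖ ^ 2 := by ring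
        _ = (∑ j, M i j ^ 2) * ‖toE x‖ ^ 2 := by rw [normsq_toE]
    calc ∑ i, (M.mulVec x i) ^ 2 ≤ ∑ i, (∑ j, M i j ^ 2) * ‖toE x‖ ^ 2 :=
          Finset.sum_le_sum fun i _ => hrow i
      _ = (∑ i, ∑ j, M i j ^ 2) * ‖toE x‖ ^ 2 := by rw [Finset.sum_mul]
  have h2 : Real.sqrt (∑ i, ∑ j, M i j ^ 2) * ‖toE x‖ ≥ 0 := by positivity
  nlinarith [norm_nonneg (toE (M.mulVec x)),
    Real.sq_sqrt (show (0:ℝ) ≤ ∑ i, ∑ j, M i j ^ 2 by positivity)]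

lemma specNorm_bound {m n : ℕ} (M : Matrix (Fin m) (Fin n) ℝ) (x : Fin n → ℝ) :
    ‖toE (M.mulVec x)‖ ≤ specNorm M * ‖toE x‖ := by
  have hbdd : BddAbove ((fun x : Fin n → ℝ => _root_.enorm (M.mulVec x)) '' {x | _root_.enorm x = 1}) := by
    refine ⟨Real.sqrt (∑ i, ∑ j, M i j ^ 2), ?_⟩
    rintro y ⟨z, hz, rfl⟩
    have := cauchy_bound M z
    rw [← enorm_eq, ← enorm_eq, hz, mul_one] at this
    exact this
  rcases eq_or_ne (toE x) 0 with hx | hx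
  · have : x = 0 := by
      funext i; exact congrFun (congrArg fromE hx) i
    simp [this, Matrix.mulVec_zero, toE_zero, hx]
  · have hxn : (0:ℝ) < ‖toE x‖ := norm_pos_iff.mpr hx
    set u : Fin n → ℝ := ‖toE x‖⁻¹ • x with hu
    have hunorm : _root_.enorm u = 1 := by
      rw [enorm_eq, toE_smul, norm_smul]
      simp [abs_of_pos (inv_pos.mpr hxn), inv_mul_cancel₀ (ne_of_gt hxn)]
    have hle : _root_.enorm (M.mulVec u) ≤ specNorm M :=
      le_csSup hbdd ⟨u, hunorm, rfl⟩
    rw [enorm_eq] at hle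
    have : M.mulVec u = ‖toE x‖⁻¹ • M.mulVec x := by
      rw [hu, Matrix.mulVec_smul]
    rw [this, toE_smul, norm_smul, Real.norm_eq_abs, abs_of_pos (inv_pos.mpr hxn)] at hle
    calc ‖toE (M.mulVec x)‖ = ‖toE x‖ * (‖toE x‖⁻¹ * ‖toE (M.mulVec x)‖) := by
          field_simp
      _ ≤ ‖toE x‖ * specNorm M := by
          apply mul_le_mul_of_nonneg_left hle (le_of_lt hxn)
      _ = specNorm M * ‖toE x‖ := mul_comm _ _

section spaces
variable {m n : ℕ}

def colspace (M : Matrix (Fin m) (Fin n) ℝ) : Submodule ℝ (Euc m) :=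
  Submodule.span ℝ (Set.range fun j => toE (fun i => M i j))

def rowspace (M : Matrix (Fin m) (Fin n) ℝ) : Submodule ℝ (Euc n) := colspace Mᵀ

def eqE (n : ℕ) : Euc n ≃ₗ[ℝ] (Fin n → ℝ) := WithLp.linearEquiv 2 ℝ _

lemma finrank_colspace_eq_rank (M : Matrix (Fin m) (Fin n) ℝ) :
    finrank ℝ (colspace M) = M.rank := by
  rw [Matrix.rank_eq_finrank_span_cols]
  have : colspace M = (Submodule.span ℝ (Set.range M.col)).map (eqE m).symm.toLinearMap := by
    rw [Submodule.map_span]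
    congr 1
    rw [← Set.range_comp]
    rfl
  rw [this, LinearEquiv.finrank_map_eq]

lemma finrank_rowspace_eq_rank (M : Matrix (Fin m) (Fin n) ℝ) :
    finrank ℝ (rowspace M) = M.rank := by
  rw [rowspace, finrank_colspace_eq_rank, Matrix.rank_transpose]

lemma col_mem_colspace (M : Matrix (Fin m) (Fin n) ℝ) (j : Fin n) :
    toE (fun i => M i j) ∈ colspace M := Submodule.subset_span ⟨j, rfl⟩

lemma row_mem_rowspace (M : Matrix (Fin m) (Fin n) ℝ) (i : Fin m) :
    toE (M i) ∈ rowspace M := Submodule.subset_span ⟨i, rfl⟩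

lemma mulVec_eq_sum_cols (M : Matrix (Fin m) (Fin n) ℝ) (x : Fin n → ℝ) :
    toE (M.mulVec x) = ∑ j, x j • toE (fun i => M i j) := by
  apply (eqE m).injective
  rw [map_sum]
  funext i
  have : (eqE m) (toE (M.mulVec x)) i = M.mulVec x i := rfl
  rw [this]
  have : (∑ j, (eqE m) (x j • toE (fun i => M i j))) i
      = ∑ j, x j * M i j := by
    rw [Finset.sum_apply]
    congr 1
  rw [this, Matrix.mulVec, dotProduct]
  exact Finset.sum_congr rfl fun j _ => mul_comm _ _

lemma mulVec_mem_colspace (M : Matrix (Fin m) (Fin n) ℝ) (x : Fin n → ℝ) :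
    toE (M.mulVec x) ∈ colspace M := by
  rw [mulVec_eq_sum_cols]
  exact Submodule.sum_mem _ fun j _ => Submodule.smul_mem _ _ (col_mem_colspace M j)

lemma rank_le_finrank_of_cols_mem (M : Matrix (Fin m) (Fin n) ℝ)
    (W : Submodule ℝ (Euc m)) (h : ∀ j, toE (fun i => M i j) ∈ W) :
    M.rank ≤ finrank ℝ W := by
  rw [← finrank_colspace_eq_rank]
  apply Submodule.finrank_mono
  rw [colspace, Submodule.span_le]
  rintro y ⟨j, rfl⟩
  exact h j

lemma frob_eq_sum_cols (M : Matrix (Fin m) (Fin n) ℝ) :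
    (∑ i, ∑ j, M i j ^ 2) = ∑ j, ‖toE (fun i => M i j)‖ ^ 2 := by
  rw [Finset.sum_comm]
  exact Finset.sum_congr rfl fun j _ => (normsq_toE _).symm

lemma frob_eq_sum_rows (M : Matrix (Fin m) (Fin n) ℝ) :
    (∑ i, ∑ j, M i j ^ 2) = ∑ i, ‖toE (M i)‖ ^ 2 := by
  exact Finset.sum_congr rfl fun i _ => (normsq_toE _).symm

lemma mulVec_apply_eq_inner (M : Matrix (Fin m) (Fin n) ℝ) (x : Fin n → ℝ) (i : Fin m) :
    M.mulVec x i = ⟪toE (M i), toE x⟫ := by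
  rw [inner_toE]; rfl

end spaces

lemma frob_le_rank_mul_sq {m n : ℕ} (M : Matrix (Fin m) (Fin n) ℝ) {k : ℕ} (hk : M.rank ≤ k)
    {s : ℝ} (hs : ∀ x : Fin n → ℝ, ‖toE (M.mulVec x)‖ ≤ s * ‖toE x‖) :
    (∑ i, ∑ j, M i j ^ 2) ≤ (k : ℝ) * s ^ 2 := by
  classical
  set K := rowspace M with hK
  have hfin : finrank ℝ K = M.rank := finrank_rowspace_eq_rank M
  set d := finrank ℝ K with hd
  let b : OrthonormalBasis (Fin d) ℝ K := stdOrthonormalBasis ℝ K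
  have hrowmem : ∀ i, toE (M i) ∈ K := row_mem_rowspace M
  have key : ∀ i, ‖toE (M i)‖ ^ 2 = ∑ α : Fin d, ⟪((b α : K) : Euc n), toE (M i)⟫ ^ 2 := by
    intro i
    set r : K := ⟨toE (M i), hrowmem i⟩ with hr
    have h1 : ‖toE (M i)‖ ^ 2 = ⟪r, r⟫ := by
      rw [real_inner_self_eq_norm_sq]
      congr 1
    have h2 : ⟪r, r⟫ = ∑ α : Fin d, ⟪r, b α⟫ * ⟪b α, r⟫ := (b.sum_inner_mul_inner r r).symm
    rw [h1, h2]
    apply Finset.sum_congr rfl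
    intro α _
    have h3 : (⟪b α, r⟫ : ℝ) = ⟪((b α : K) : Euc n), toE (M i)⟫ :=
      (Submodule.coe_inner K (b α) r).symm
    have h4 : (⟪r, b α⟫ : ℝ) = ⟪((b α : K) : Euc n), toE (M i)⟫ := by
      rw [real_inner_comm]; exact h3
    rw [h3, h4, sq]
  have hcol : ∀ α : Fin d, (∑ i, ⟪((b α : K) : Euc n), toE (M i)⟫ ^ 2) ≤ s ^ 2 := by
    intro α
    have hx : ∀ i, ⟪((b α : K) : Euc n), toE (M i)⟫ = M.mulVec (fromE (b α : K)) i := by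
      intro i
      rw [mulVec_apply_eq_inner, real_inner_comm]
      rfl
    have heq : (∑ i, ⟪((b α : K) : Euc n), toE (M i)⟫ ^ 2)
        = ‖toE (M.mulVec (fromE ((b α : K))))‖ ^ 2 := by
      rw [normsq_toE]
      exact Finset.sum_congr rfl fun i _ => by rw [hx i]
    rw [heq]
    have hb1 : ‖toE (fromE ((b α : K) : Euc n))‖ = 1 := by
      rw [toE_fromE]
      rw [show ‖((b α : K) : Euc n)‖ = ‖b α‖ from rfl]
      exact b.orthonormal.1 α
    have hle := hs (fromE ((b α : K) : Euc n))
    rw [hb1, mul_one] at hle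
    nlinarith [norm_nonneg (toE (M.mulVec (fromE ((b α : K) : Euc n))))]
  have hdk : d ≤ k := by omega
  calc (∑ i, ∑ j, M i j ^ 2) = ∑ i, ‖toE (M i)‖ ^ 2 := frob_eq_sum_rows M
    _ = ∑ i, ∑ α : Fin d, ⟪((b α : K) : Euc n), toE (M i)⟫ ^ 2 :=
        Finset.sum_congr rfl fun i _ => key i
    _ = ∑ α : Fin d, ∑ i, ⟪((b α : K) : Euc n), toE (M i)⟫ ^ 2 := Finset.sum_comm
    _ ≤ ∑ _α : Fin d, s ^ 2 := Finset.sum_le_sum fun α _ => hcol α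
    _ = (d : ℝ) * s ^ 2 := by
        rw [Finset.sum_const, Finset.card_univ, Fintype.card_fin, nsmul_eq_mul]
    _ ≤ (k : ℝ) * s ^ 2 :=
        mul_le_mul_of_nonneg_right (by exact_mod_cast hdk) (sq_nonneg s)

lemma frob_expand {m n : ℕ} (M : Matrix (Fin m) (Fin n) ℝ) (a : Fin m → ℝ) (b : Fin n → ℝ) :
    ∑ i, ∑ j, (M i j + a i * b j) ^ 2
      = (∑ i, ∑ j, M i j ^ 2) + (∑ i, a i ^ 2) * (∑ j, b j ^ 2)
        + 2 * ∑ i, a i * M.mulVec b i := by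
  have hrow : ∀ i, ∑ j, (M i j + a i * b j) ^ 2
      = (∑ j, M i j ^ 2) + a i ^ 2 * (∑ j, b j ^ 2) + 2 * (a i * M.mulVec b i) := by
    intro i
    have : ∀ j, (M i j + a i * b j) ^ 2
        = M i j ^ 2 + a i ^ 2 * b j ^ 2 + 2 * (a i * (M i j * b j)) := by
      intro j; ring
    rw [Finset.sum_congr rfl fun j _ => this j]
    rw [Finset.sum_add_distrib, Finset.sum_add_distrib, ← Finset.mul_sum, ← Finset.mul_sum,
      ← Finset.mul_sum]
    congr 2
  rw [Finset.sum_congr rfl fun i _ => hrow i]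
  rw [Finset.sum_add_distrib, Finset.sum_add_distrib, ← Finset.sum_mul, ← Finset.mul_sum]

section proj
variable {m n : ℕ} (W : Submodule ℝ (Euc m))

lemma proj_pythagoras (v : Euc m) (a : Euc m) (ha : a ∈ W) :
    ‖v - a‖ ^ 2 = ‖v - (orthogonalProjection W v : Euc m)‖ ^ 2
      + ‖(orthogonalProjection W v : Euc m) - a‖ ^ 2 := by
  have hmem1 : v - (orthogonalProjection W v : Euc m) ∈ Wᗮ :=
    sub_starProjection_mem_orthogonal v
  have hmem2 : (orthogonalProjection W v : Euc m) - a ∈ W :=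
    Submodule.sub_mem W (SetLike.coe_mem _) ha
  have hinner : ⟪v - (orthogonalProjection W v : Euc m),
      (orthogonalProjection W v : Euc m) - a⟫ = 0 :=
    Submodule.inner_left_of_mem_orthogonal hmem2 hmem1
  have hdecomp : v - a = (v - (orthogonalProjection W v : Euc m))
      + ((orthogonalProjection W v : Euc m) - a) := by abel
  rw [hdecomp, norm_add_sq_real, hinner]
  ring

lemma norm_proj_le (v : Euc m) : ‖(orthogonalProjection W v : Euc m)‖ ≤ ‖v‖ := by
  have h := proj_pythagoras W v 0 (Submodule.zero_mem W)
  simp only [sub_zero] at h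
  nlinarith [norm_nonneg (v - (orthogonalProjection W v : Euc m)),
    norm_nonneg (orthogonalProjection W v : Euc m), norm_nonneg v]

lemma norm_sub_proj_le (v : Euc m) : ‖v - (orthogonalProjection W v : Euc m)‖ ≤ ‖v‖ := by
  have h := proj_pythagoras W v 0 (Submodule.zero_mem W)
  simp only [sub_zero] at h
  nlinarith [norm_nonneg (v - (orthogonalProjection W v : Euc m)),
    norm_nonneg (orthogonalProjection W v : Euc m), norm_nonneg v]

def projCols (N : Matrix (Fin m) (Fin n) ℝ) : Matrix (Fin m) (Fin n) ℝ :=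
  fun i j => (orthogonalProjection W (toE (fun i' => N i' j)) : Euc m) i

lemma projCols_col (N : Matrix (Fin m) (Fin n) ℝ) (j : Fin n) :
    toE (fun i => projCols W N i j) = (orthogonalProjection W (toE (fun i' => N i' j)) : Euc m) :=
  rfl

lemma projCols_mulVec (N : Matrix (Fin m) (Fin n) ℝ) (y : Fin n → ℝ) :
    toE ((projCols W N).mulVec y) = (orthogonalProjection W (toE (N.mulVec y)) : Euc m) := by
  rw [mulVec_eq_sum_cols, mulVec_eq_sum_cols N y]
  rw [map_sum]
  rw [show ((∑ j, orthogonalProjection W (y j • toE fun i => N i j) : W) : Euc m)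
    = ∑ j, ((orthogonalProjection W (y j • toE fun i => N i j) : W) : Euc m) by
      exact_mod_cast rfl]
  apply Finset.sum_congr rfl
  intro j _
  rw [projCols_col, _root_.map_smul]
  rfl

end proj

lemma frob_sub_eq {m n : ℕ} (X Y : Matrix (Fin m) (Fin n) ℝ) :
    (∑ i, ∑ j, (X i j - Y i j) ^ 2)
      = ∑ j, ‖toE (fun i => X i j) - toE (fun i => Y i j)‖ ^ 2 := by
  rw [Finset.sum_comm]
  refine Finset.sum_congr rfl fun j _ => ?_
  rw [← toE_sub, normsq_toE]
  rfl

lemma align {m n k : ℕ} (A Ahat : Matrix (Fin m) (Fin n) ℝ)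
    (hr : Ahat.rank ≤ k)
    (hopt : ∀ C : Matrix (Fin m) (Fin n) ℝ, C.rank ≤ k →
      (∑ i, ∑ j, (A i j - Ahat i j) ^ 2) ≤ ∑ i, ∑ j, (A i j - C i j) ^ 2) :
    ∀ j, toE (fun i => Ahat i j)
      = (orthogonalProjection (colspace Ahat) (toE (fun i => A i j)) : Euc m) := by
  set U := colspace Ahat with hU
  set C := projCols U A with hC
  have hrankC : C.rank ≤ k := by
    refine le_trans (rank_le_finrank_of_cols_mem C U ?_) ?_
    · intro j
      rw [hC, projCols_col]
      exact SetLike.coe_mem _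
    · rw [hU, finrank_colspace_eq_rank]
      exact hr
  have hbest := hopt C hrankC
  -- rewrite both sides as column sums
  have hL := frob_sub_eq A Ahat
  have hR := frob_sub_eq A C
  have hpyth : ∀ j, ‖toE (fun i => A i j) - toE (fun i => Ahat i j)‖ ^ 2
      = ‖toE (fun i => A i j) - toE (fun i => C i j)‖ ^ 2
        + ‖toE (fun i => C i j) - toE (fun i => Ahat i j)‖ ^ 2 := by
    intro j
    have hmem : toE (fun i => Ahat i j) ∈ U := col_mem_colspace Ahat j
    have := proj_pythagoras U (toE (fun i => A i j)) (toE (fun i => Ahat i j)) hmem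
    rw [this]
    congr 2 <;> rw [hC, projCols_col]
  have hsum : (∑ j, ‖toE (fun i => C i j) - toE (fun i => Ahat i j)‖ ^ 2) ≤ 0 := by
    have h1 := hbest
    rw [hL, hR] at h1
    have h2 : (∑ j, (‖toE (fun i => A i j) - toE (fun i => C i j)‖ ^ 2
        + ‖toE (fun i => C i j) - toE (fun i => Ahat i j)‖ ^ 2))
        ≤ ∑ j, ‖toE (fun i => A i j) - toE (fun i => C i j)‖ ^ 2 := by
      calc _ = ∑ j, ‖toE (fun i => A i j) - toE (fun i => Ahat i j)‖ ^ 2 :=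
            (Finset.sum_congr rfl fun j _ => (hpyth j).symm)
        _ ≤ _ := h1
    rw [Finset.sum_add_distrib] at h2
    linarith
  intro j
  have hterm : ‖toE (fun i => C i j) - toE (fun i => Ahat i j)‖ ^ 2 = 0 := by
    have hnn : ∀ j' ∈ Finset.univ, (0:ℝ) ≤ ‖toE (fun i => C i j') - toE (fun i => Ahat i j')‖ ^ 2 :=
      fun j' _ => sq_nonneg _
    have := Finset.sum_le_sum hnn
    have h0 : (0:ℝ) ≤ ∑ j', ‖toE (fun i => C i j') - toE (fun i => Ahat i j')‖ ^ 2 :=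
      Finset.sum_nonneg hnn
    have heach := (Finset.sum_eq_zero_iff_of_nonneg hnn).mp (le_antisymm hsum h0)
    exact heach j (Finset.mem_univ j)
  have : toE (fun i => C i j) - toE (fun i => Ahat i j) = 0 := by
    have := (pow_eq_zero_iff (two_ne_zero)).mp hterm
    exact norm_eq_zero.mp this
  have h5 : toE (fun i => Ahat i j) = toE (fun i => C i j) := by
    have := sub_eq_zero.mp this
    exact this.symm
  rw [h5, hC, projCols_col]

lemma finrank_sup_le {n : ℕ} (p q : Submodule ℝ (Euc n)) :
    finrank ℝ (p ⊔ q : Submodule ℝ (Euc n)) ≤ finrank ℝ p + finrank ℝ q := by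
  have := Submodule.finrank_sup_add_finrank_inf_eq p q
  omega

set_option maxHeartbeats 2000000 in
lemma spec_bound_of_best {m n k : ℕ} (A B Ahat : Matrix (Fin m) (Fin n) ℝ)
    (hB : B.rank = k) (hAhat_rank : Ahat.rank ≤ k)
    (hbest : ∀ C : Matrix (Fin m) (Fin n) ℝ, C.rank ≤ k →
      (∑ i, ∑ j, (A i j - Ahat i j) ^ 2) ≤ ∑ i, ∑ j, (A i j - C i j) ^ 2)
    {t : ℝ} (ht0 : 0 ≤ t)
    (ht : ∀ y : Fin n → ℝ, ‖toE ((A - B).mulVec y)‖ ≤ t * ‖toE y‖) :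
    ∀ x : Fin n → ℝ, ‖toE ((A - Ahat).mulVec x)‖ ≤ t * ‖toE x‖ := by
  classical
  set U := colspace Ahat with hU
  set K := rowspace Ahat with hKdef
  have hcol := align A Ahat hAhat_rank hbest
  have hoptT : ∀ C : Matrix (Fin n) (Fin m) ℝ, C.rank ≤ k →
      (∑ i, ∑ j, (Aᵀ i j - Ahatᵀ i j) ^ 2) ≤ ∑ i, ∑ j, (Aᵀ i j - C i j) ^ 2 := by
    intro C hC
    have h1 := hbest Cᵀ (by rw [Matrix.rank_transpose]; exact hC)
    have e1 : (∑ i, ∑ j, (Aᵀ i j - Ahatᵀ i j) ^ 2 : ℝ)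
        = ∑ i, ∑ j, (A i j - Ahat i j) ^ 2 := Finset.sum_comm
    have e2 : (∑ i, ∑ j, (Aᵀ i j - C i j) ^ 2 : ℝ)
        = ∑ i, ∑ j, (A i j - Cᵀ i j) ^ 2 := Finset.sum_comm
    rw [e1, e2]; exact h1
  have hrowAl : ∀ i : Fin m, toE (Ahat i)
      = (orthogonalProjection K (toE (A i)) : Euc n) := by
    intro i
    exact align Aᵀ Ahatᵀ (by rw [Matrix.rank_transpose]; exact hAhat_rank) hoptT i
  have hAhat_eq : Ahat = projCols U A := by
    funext i j
    exact congrArg (fun v : Euc m => v i) (hcol j)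
  have hPmul : ∀ y : Fin n → ℝ,
      toE (Ahat.mulVec y) = (orthogonalProjection U (toE (A.mulVec y)) : Euc m) := by
    intro y
    conv_lhs => rw [hAhat_eq]
    exact projCols_mulVec U A y
  have hMsub : ∀ y : Fin n → ℝ,
      toE ((A - Ahat).mulVec y) = toE (A.mulVec y) - toE (Ahat.mulVec y) := by
    intro y
    rw [Matrix.sub_mulVec, toE_sub]
  have hsubmem : ∀ y : Fin n → ℝ, toE ((A - Ahat).mulVec y) ∈ Uᗮ := by
    intro y
    rw [hMsub, hPmul]
    exact sub_starProjection_mem_orthogonal _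
  have hrowKmem : ∀ i, toE (Ahat i) ∈ K := row_mem_rowspace Ahat
  have hrowsub : ∀ i, toE (A i) - toE (Ahat i) ∈ Kᗮ := by
    intro i
    rw [hrowAl i]
    exact sub_starProjection_mem_orthogonal _
  have hrow0 : ∀ u : Euc n, u ∈ K → (A - Ahat).mulVec (fromE u) = 0 := by
    intro u hu
    funext i
    have h1 : (A - Ahat).mulVec (fromE u) i = ⟪toE ((A - Ahat) i), u⟫ := by
      rw [mulVec_apply_eq_inner]
      rfl
    have h2 : toE ((A - Ahat) i) = toE (A i) - toE (Ahat i) := rfl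
    rw [h1, h2]
    have := Submodule.inner_left_of_mem_orthogonal hu (hrowsub i)
    simpa using this
  have hAhat0 : ∀ u : Euc n, u ∈ Kᗮ → Ahat.mulVec (fromE u) = 0 := by
    intro u hu
    funext i
    have h1 : Ahat.mulVec (fromE u) i = ⟪toE (Ahat i), u⟫ := by
      rw [mulVec_apply_eq_inner]; rfl
    rw [h1]
    simpa using Submodule.inner_right_of_mem_orthogonal (hrowKmem i) hu
  intro x
  by_contra hcontra
  push_neg at hcontra
  -- construct unit vector x₀ ⟂ K with large residual
  set x' : Euc n := toE x - (orthogonalProjection K (toE x) : Euc n) with hx'def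
  have hx'mem : x' ∈ Kᗮ := sub_starProjection_mem_orthogonal _
  have hxsplit : x = fromE x' + fromE ((orthogonalProjection K (toE x) : Euc n)) := by
    funext i
    show x i = x' i + (orthogonalProjection K (toE x) : Euc n) i
    rw [hx'def]
    show x i = (toE x i - (orthogonalProjection K (toE x) : Euc n) i) + _
    simp only [toE_apply]
    ring
  have hmulx' : (A - Ahat).mulVec (fromE x') = (A - Ahat).mulVec x := by
    conv_rhs => rw [hxsplit]
    rw [Matrix.mulVec_add, hrow0 _ (SetLike.coe_mem _), add_zero]
  have hle1 : ‖x'‖ ≤ ‖toE x‖ := norm_sub_proj_le K (toE x)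
  have hx'ne : x' ≠ 0 := by
    intro h0
    have hz : (A - Ahat).mulVec x = 0 := by
      rw [← hmulx', h0]
      show (A - Ahat).mulVec (fromE (0 : Euc n)) = 0
      have : fromE (0 : Euc n) = (0 : Fin n → ℝ) := rfl
      rw [this, Matrix.mulVec_zero]
    rw [hz, toE_zero, norm_zero] at hcontra
    nlinarith [norm_nonneg (toE x)]
  have hc : (0:ℝ) < ‖x'‖ := norm_pos_iff.mpr hx'ne
  set x₀ : Euc n := ‖x'‖⁻¹ • x' with hx₀def
  have hx₀mem : x₀ ∈ Kᗮ := Submodule.smul_mem _ _ hx'mem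
  have hx₀norm : ‖x₀‖ = 1 := by
    rw [hx₀def, norm_smul, Real.norm_eq_abs, abs_of_pos (inv_pos.mpr hc),
      inv_mul_cancel₀ hc.ne']
  set g : Fin m → ℝ := (A - Ahat).mulVec (fromE x₀) with hgdef
  set s : ℝ := ‖toE g‖ with hsdef
  have hfromx₀ : fromE x₀ = ‖x'‖⁻¹ • fromE x' := rfl
  have hseq : s = ‖x'‖⁻¹ * ‖toE ((A - Ahat).mulVec x)‖ := by
    rw [hsdef, hgdef, hfromx₀, Matrix.mulVec_smul, toE_smul, norm_smul,
      Real.norm_eq_abs, abs_of_pos (inv_pos.mpr hc), hmulx']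
  have hts : t < s := by
    rw [hseq]
    rw [show ‖toE ((A - Ahat).mulVec x)‖ = ‖x'‖ * (‖x'‖⁻¹ * ‖toE ((A - Ahat).mulVec x)‖) by
      field_simp] at hcontra
    nlinarith [hcontra, hle1, hc, ht0, mul_le_mul_of_nonneg_left hle1 ht0]
  have hspos : (0:ℝ) < s := lt_of_le_of_lt ht0 hts
  have hgU : toE g ∈ Uᗮ := hsubmem (fromE x₀)
  have hgne : toE g ≠ 0 := fun h0 => by rw [hsdef, h0, norm_zero] at hspos; exact lt_irrefl _ hspos
  have hAx₀ : toE (A.mulVec (fromE x₀)) = toE g := by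
    rw [hgdef, Matrix.sub_mulVec, hAhat0 x₀ hx₀mem, sub_zero]
  have hgsq : (∑ i, g i ^ 2) = s ^ 2 := by rw [hsdef, normsq_toE]
  have hx₀sq : (∑ j, fromE x₀ j ^ 2) = 1 := by
    have := normsq_toE (fromE x₀)
    rw [toE_fromE, hx₀norm] at this
    rw [← this]
    norm_num
  rcases Nat.lt_or_ge Ahat.rank k with hlt | hge
  · -- low rank case: add a rank-one correction, contradiction
    set C : Matrix (Fin m) (Fin n) ℝ := fun i j => Ahat i j + g i * fromE x₀ j with hCdef
    have hcolC : ∀ j, toE (fun i => C i j)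
        = toE (fun i => Ahat i j) + fromE x₀ j • toE g := by
      intro j
      rw [← toE_smul, ← toE_add]
      congr 1
      funext i
      show C i j = Ahat i j + fromE x₀ j * g i
      rw [hCdef]
      ring
    have hrankC : C.rank ≤ k := by
      have hW : ∀ j, toE (fun i => C i j) ∈ U ⊔ (ℝ ∙ toE g) := by
        intro j
        rw [hcolC j]
        exact Submodule.add_mem _
          (Submodule.mem_sup_left (col_mem_colspace Ahat j))
          (Submodule.mem_sup_right (Submodule.smul_mem _ _ (Submodule.mem_span_singleton_self _)))
      refine le_trans (rank_le_finrank_of_cols_mem C _ hW) ?_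
      refine le_trans (finrank_sup_le _ _) ?_
      rw [finrank_span_singleton hgne]
      have : finrank ℝ U = Ahat.rank := by rw [hU, finrank_colspace_eq_rank]
      omega
    have hbestC := hbest C hrankC
    have hexp : (∑ i, ∑ j, (A i j - C i j) ^ 2)
        = (∑ i, ∑ j, (A i j - Ahat i j) ^ 2) - s ^ 2 := by
      have e0 : ∀ i j, A i j - C i j = (A - Ahat) i j + (-g) i * fromE x₀ j := by
        intro i j
        rw [hCdef]
        show A i j - (Ahat i j + g i * fromE x₀ j) = (A i j - Ahat i j) + -g i * fromE x₀ j
        ring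
      have e1 : (∑ i, ∑ j, (A i j - C i j) ^ 2)
          = ∑ i, ∑ j, ((A - Ahat) i j + (-g) i * fromE x₀ j) ^ 2 := by
        refine Finset.sum_congr rfl fun i _ => Finset.sum_congr rfl fun j _ => ?_
        rw [e0 i j]
      rw [e1, frob_expand]
      have hnegg : (∑ i, (-g) i ^ 2) = s ^ 2 := by
        rw [← hgsq]
        exact Finset.sum_congr rfl fun i _ => by simp only [Pi.neg_apply]; ring
      have hmul : (A - Ahat).mulVec (fromE x₀) = g := hgdef.symm
      have hdot : (∑ i, (-g) i * (A - Ahat).mulVec (fromE x₀) i) = - s ^ 2 := by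
        rw [hmul, ← hgsq]
        rw [← Finset.sum_neg_distrib]
        exact Finset.sum_congr rfl fun i _ => by simp only [Pi.neg_apply]; ring
      rw [hnegg, hx₀sq, hdot]
      have efr : (∑ i, ∑ j, ((A - Ahat) i j) ^ 2) = ∑ i, ∑ j, (A i j - Ahat i j) ^ 2 := by
        refine Finset.sum_congr rfl fun i _ => Finset.sum_congr rfl fun j _ => ?_
        rw [Matrix.sub_apply]
      rw [efr]
      ring
    rw [hexp] at hbestC
    nlinarith [hbestC, hspos]
  · -- full rank case
    have hKfin : finrank ℝ K = k := by
      have h1 : finrank ℝ K = Ahat.rank := by rw [hKdef, finrank_rowspace_eq_rank]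
      omega
    -- every unit vector in K is stretched by at least s
    have hu_unit : ∀ u : Euc n, u ∈ K → ‖u‖ = 1 →
        s ≤ ‖toE (Ahat.mulVec (fromE u))‖ := by
      intro u hu hu1
      set p : Fin m → ℝ := Ahat.mulVec (fromE u) with hpdef
      have hpinner : ∀ i, p i = ⟪toE (Ahat i), u⟫ := by
        intro i
        rw [hpdef, mulVec_apply_eq_inner]
        rfl
      set Cu : Matrix (Fin m) (Fin n) ℝ :=
        fun i j => Ahat i j - p i * fromE u j + g i * fromE x₀ j with hCudef
      -- rank bound via rows
      have hrowCu : ∀ i, toE (Cu i) = (toE (Ahat i) - p i • u) + g i • x₀ := by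
        intro i
        apply (eqE n).injective
        funext j
        show Cu i j = (Ahat i j - p i * u j) + g i * x₀ j
        rw [hCudef]
        rfl
      have hWmem : ∀ i, toE (Cu i) ∈ (K ⊓ (ℝ ∙ u)ᗮ) ⊔ (ℝ ∙ x₀) := by
        intro i
        rw [hrowCu i]
        refine Submodule.add_mem _ (Submodule.mem_sup_left ?_) (Submodule.mem_sup_right ?_)
        · refine Submodule.mem_inf.mpr ⟨Submodule.sub_mem _ (hrowKmem i)
            (Submodule.smul_mem _ _ hu), ?_⟩
          rw [Submodule.mem_orthogonal_singleton_iff_inner_left]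
          rw [inner_sub_left, real_inner_smul_left]
          rw [real_inner_self_eq_norm_sq, hu1]
          have : ⟪toE (Ahat i), u⟫ = p i := (hpinner i).symm
          rw [this]
          ring
        · exact Submodule.smul_mem _ _ (Submodule.mem_span_singleton_self _)
      have hinfle : finrank ℝ (K ⊓ (ℝ ∙ u)ᗮ : Submodule ℝ (Euc n)) < k := by
        rw [← hKfin]
        apply Submodule.finrank_lt_finrank_of_lt
        refine lt_of_le_of_ne inf_le_left ?_
        intro heqK
        have hu' : u ∈ K ⊓ (ℝ ∙ u)ᗮ := by rw [heqK]; exact hu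
        have : ⟪u, u⟫ = (0:ℝ) :=
          Submodule.inner_right_of_mem_orthogonal
            (Submodule.mem_span_singleton_self u) (Submodule.mem_inf.mp hu').2
        rw [real_inner_self_eq_norm_sq, hu1] at this
        norm_num at this
      have hrankCu : Cu.rank ≤ k := by
        rw [← Matrix.rank_transpose]
        refine le_trans (rank_le_finrank_of_cols_mem Cuᵀ _ (fun i => hWmem i)) ?_
        refine le_trans (finrank_sup_le _ _) ?_
        have hx₀ne : x₀ ≠ 0 := by
          intro h0
          rw [h0, norm_zero] at hx₀norm
          norm_num at hx₀norm
        rw [finrank_span_singleton hx₀ne]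
        omega
      have hbestCu := hbest Cu hrankCu
      -- expand the Frobenius norm
      have husq : (∑ j, fromE u j ^ 2) = 1 := by
        have := normsq_toE (fromE u)
        rw [toE_fromE, hu1] at this
        rw [← this]
        norm_num
      have hux₀ : (∑ j, fromE u j * fromE x₀ j) = 0 := by
        have := Submodule.inner_right_of_mem_orthogonal hu hx₀mem
        rw [← inner_toE, toE_fromE, toE_fromE]
        exact this
      set M2 : Matrix (Fin m) (Fin n) ℝ :=
        fun i j => (A - Ahat) i j + p i * fromE u j with hM2def
      have e1 : (∑ i, ∑ j, M2 i j ^ 2)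
          = (∑ i, ∑ j, (A i j - Ahat i j) ^ 2) + (∑ i, p i ^ 2) := by
      -- via frob_expand
        have := frob_expand (A - Ahat) p (fromE u)
        rw [hrow0 u hu] at this
        simp only [Pi.zero_apply, mul_zero, Finset.sum_const_zero] at this
        rw [hM2def]
        rw [this, husq]
        have efr : (∑ i, ∑ j, ((A - Ahat) i j) ^ 2) = ∑ i, ∑ j, (A i j - Ahat i j) ^ 2 :=
          Finset.sum_congr rfl fun i _ => Finset.sum_congr rfl fun j _ => by
            rw [Matrix.sub_apply]
        rw [efr]
        ring
      have hM2mul : M2.mulVec (fromE x₀) = g := by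
        funext i
        have expand : M2.mulVec (fromE x₀) i
            = (A - Ahat).mulVec (fromE x₀) i + p i * (∑ j, fromE u j * fromE x₀ j) := by
          show (∑ j, M2 i j * fromE x₀ j) = (∑ j, (A - Ahat) i j * fromE x₀ j) + _
          rw [Finset.mul_sum, ← Finset.sum_add_distrib]
          refine Finset.sum_congr rfl fun j _ => ?_
          rw [hM2def]
          show ((A - Ahat) i j + p i * fromE u j) * fromE x₀ j = _
          ring
        rw [expand, hux₀, mul_zero, add_zero, ← hgdef]
      have e2 : (∑ i, ∑ j, (A i j - Cu i j) ^ 2)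
          = (∑ i, ∑ j, (A i j - Ahat i j) ^ 2) + (∑ i, p i ^ 2) - s ^ 2 := by
        have e0 : ∀ i j, A i j - Cu i j = M2 i j + (-g) i * fromE x₀ j := by
          intro i j
          rw [hCudef, hM2def]
          show A i j - (Ahat i j - p i * fromE u j + g i * fromE x₀ j)
            = ((A i j - Ahat i j) + p i * fromE u j) + -g i * fromE x₀ j
          ring
        have e1' : (∑ i, ∑ j, (A i j - Cu i j) ^ 2)
            = ∑ i, ∑ j, (M2 i j + (-g) i * fromE x₀ j) ^ 2 :=
          Finset.sum_congr rfl fun i _ => Finset.sum_congr rfl fun j _ => by rw [e0 i j]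
        rw [e1', frob_expand, hM2mul, e1, hx₀sq]
        have hnegg : (∑ i, (-g) i ^ 2) = s ^ 2 := by
          rw [← hgsq]
          exact Finset.sum_congr rfl fun i _ => by simp only [Pi.neg_apply]; ring
        have hdot : (∑ i, (-g) i * g i) = - s ^ 2 := by
          rw [← hgsq, ← Finset.sum_neg_distrib]
          exact Finset.sum_congr rfl fun i _ => by simp only [Pi.neg_apply]; ring
        rw [hnegg, hdot]
        ring
      rw [e2] at hbestCu
      have hps : s ^ 2 ≤ ∑ i, p i ^ 2 := by linarith
      have hpnorm : (∑ i, p i ^ 2) = ‖toE p‖ ^ 2 := (normsq_toE p).symm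
      rw [hpnorm] at hps
      have := norm_nonneg (toE p)
      nlinarith
    -- general (non-unit) version
    have hu_bound : ∀ u : Euc n, u ∈ K →
        s * ‖u‖ ≤ ‖toE (Ahat.mulVec (fromE u))‖ := by
      intro u hu
      rcases eq_or_ne u 0 with h0 | hne
      · rw [h0]
        simp only [norm_zero, mul_zero]
        exact norm_nonneg _
      · have hcu : (0:ℝ) < ‖u‖ := norm_pos_iff.mpr hne
        have hunit := hu_unit (‖u‖⁻¹ • u) (Submodule.smul_mem _ _ hu)
          (by rw [norm_smul, Real.norm_eq_abs, abs_of_pos (inv_pos.mpr hcu),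
            inv_mul_cancel₀ hcu.ne'])
        have hsc : toE (Ahat.mulVec (fromE (‖u‖⁻¹ • u)))
            = ‖u‖⁻¹ • toE (Ahat.mulVec (fromE u)) := by
          have : fromE (‖u‖⁻¹ • u) = ‖u‖⁻¹ • fromE u := rfl
          rw [this, Matrix.mulVec_smul, toE_smul]
        rw [hsc, norm_smul, Real.norm_eq_abs, abs_of_pos (inv_pos.mpr hcu)] at hunit
        calc s * ‖u‖ ≤ (‖u‖⁻¹ * ‖toE (Ahat.mulVec (fromE u))‖) * ‖u‖ :=
              mul_le_mul_of_nonneg_right hunit (norm_nonneg u)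
          _ = ‖toE (Ahat.mulVec (fromE u))‖ := by field_simp
    -- the subspace V = K ⊔ span x₀ has dimension k+1 and B is injective on it
    have hx₀ne : x₀ ≠ 0 := by
      intro h0
      rw [h0, norm_zero] at hx₀norm
      norm_num at hx₀norm
    have hspanle : (ℝ ∙ x₀) ≤ Kᗮ := by
      rw [Submodule.span_singleton_le_iff_mem]
      exact hx₀mem
    have hinfbot : K ⊓ (ℝ ∙ x₀) = ⊥ := by
      apply le_bot_iff.mp
      refine le_trans (inf_le_inf_left K hspanle) ?_
      rw [(Submodule.orthogonal_disjoint K).eq_bot]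
    have hVfin : finrank ℝ (K ⊔ (ℝ ∙ x₀) : Submodule ℝ (Euc n)) = k + 1 := by
      have := Submodule.finrank_sup_add_finrank_inf_eq K (ℝ ∙ x₀)
      rw [hinfbot, finrank_bot, finrank_span_singleton hx₀ne, hKfin] at this
      omega
    set V : Submodule ℝ (Euc n) := K ⊔ (ℝ ∙ x₀) with hVdef
    have hBlow : ∀ y : Euc n, y ∈ V → (s - t) * ‖y‖ ≤ ‖toE (B.mulVec (fromE y))‖ := by
      intro y hy
      obtain ⟨u, hu, z, hz, hyz⟩ := Submodule.mem_sup.mp hy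
      obtain ⟨c, rfl⟩ := Submodule.mem_span_singleton.mp hz
      subst hyz
      have hfrom : fromE (u + c • x₀) = fromE u + c • fromE x₀ := rfl
      have hAy : toE (A.mulVec (fromE (u + c • x₀)))
          = toE (Ahat.mulVec (fromE u)) + c • toE g := by
        rw [hfrom, Matrix.mulVec_add, Matrix.mulVec_smul, toE_add, toE_smul, hAx₀]
        congr 1
        have h1 : (A - Ahat).mulVec (fromE u) = 0 := hrow0 u hu
        rw [Matrix.sub_mulVec] at h1
        have := sub_eq_zero.mp h1
        rw [this]
      have hABu : toE (Ahat.mulVec (fromE u)) ∈ U := by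
        rw [hU]
        exact mulVec_mem_colspace Ahat (fromE u)
      have hcg : c • toE g ∈ Uᗮ := Submodule.smul_mem _ _ hgU
      have hinner0 : ⟪toE (Ahat.mulVec (fromE u)), c • toE g⟫ = (0:ℝ) :=
        Submodule.inner_right_of_mem_orthogonal hABu hcg
      have hAysq : ‖toE (A.mulVec (fromE (u + c • x₀)))‖ ^ 2
          = ‖toE (Ahat.mulVec (fromE u))‖ ^ 2 + c ^ 2 * s ^ 2 := by
        rw [hAy, norm_add_sq_real, hinner0, norm_smul, Real.norm_eq_abs, ← hsdef]
        rw [mul_pow, sq_abs]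
        ring
      have hysq : ‖u + c • x₀‖ ^ 2 = ‖u‖ ^ 2 + c ^ 2 := by
        have hinner1 : ⟪u, c • x₀⟫ = (0:ℝ) :=
          Submodule.inner_right_of_mem_orthogonal hu (Submodule.smul_mem _ _ hx₀mem)
        rw [norm_add_sq_real, hinner1, norm_smul, Real.norm_eq_abs, hx₀norm]
        rw [mul_pow, sq_abs]
        ring
      have hAnorm : s * ‖u + c • x₀‖ ≤ ‖toE (A.mulVec (fromE (u + c • x₀)))‖ := by
        have h1 := hu_bound u hu
        have h2 : s ^ 2 * ‖u + c • x₀‖ ^ 2 ≤ ‖toE (A.mulVec (fromE (u + c • x₀)))‖ ^ 2 := by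
          rw [hAysq, hysq]
          have h3 : s ^ 2 * ‖u‖ ^ 2 ≤ ‖toE (Ahat.mulVec (fromE u))‖ ^ 2 := by
            have h4 := mul_le_mul h1 h1 (mul_nonneg hspos.le (norm_nonneg u)) (norm_nonneg _)
            nlinarith [h4]
          nlinarith
        nlinarith [norm_nonneg (toE (A.mulVec (fromE (u + c • x₀)))),
          norm_nonneg (u + c • x₀), mul_nonneg hspos.le (norm_nonneg (u + c • x₀))]
      have htri : ‖toE (A.mulVec (fromE (u + c • x₀)))‖
          ≤ t * ‖u + c • x₀‖ + ‖toE (B.mulVec (fromE (u + c • x₀)))‖ := by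
        have hsubAB : toE (A.mulVec (fromE (u + c • x₀)))
            = toE ((A - B).mulVec (fromE (u + c • x₀))) + toE (B.mulVec (fromE (u + c • x₀))) := by
          rw [Matrix.sub_mulVec, toE_sub]
          abel
        rw [hsubAB]
        refine le_trans (norm_add_le _ _) ?_
        have := ht (fromE (u + c • x₀))
        rw [toE_fromE] at this
        exact add_le_add_left this _
      have := hAnorm.trans htri
      nlinarith [this]
    -- injectivity gives rank B ≥ k + 1, contradiction
    set f : V →ₗ[ℝ] (Fin m → ℝ) :=
      B.mulVecLin ∘ₗ ((eqE n).toLinearMap ∘ₗ V.subtype) with hfdef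
    have hNfapp : ∀ y : V, f y = B.mulVec (fromE (y : Euc n)) := fun y => rfl
    have hinj : Function.Injective f := by
      rw [← LinearMap.ker_eq_bot]
      apply (Submodule.eq_bot_iff _).mpr
      intro y hy
      have hfy : f y = 0 := hy
      have h1 := hBlow (y : Euc n) (SetLike.coe_mem y)
      rw [← hNfapp y, hfy, toE_zero, norm_zero] at h1
      have hst' : 0 < s - t := by linarith
      have : ‖(y : Euc n)‖ ≤ 0 := by nlinarith
      have : (y : Euc n) = 0 := norm_le_zero_iff.mp this
      exact Subtype.ext this
    have hrange := LinearMap.finrank_range_of_inj hinj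
    have hsub : LinearMap.range f ≤ LinearMap.range B.mulVecLin := by
      rw [hfdef]
      exact LinearMap.range_comp_le_range _ _
    have hle : finrank ℝ (LinearMap.range f) ≤ finrank ℝ (LinearMap.range B.mulVecLin) :=
      Submodule.finrank_mono hsub
    have hfV : finrank ℝ V = k + 1 := hVfin
    have hrankB : finrank ℝ (LinearMap.range B.mulVecLin) = k := by
      rw [← hB]
      rfl
    omega

set_option maxHeartbeats 1000000 in

/-- If `rank B = k` and `Â` is a best rank-`k` Frobenius approximation of `A`, then
`‖Â - B‖_F² ≤ 5 k ‖A - B‖₂²`. -/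
theorem best_rank_k_close_to_low_rank (m n k : ℕ)
    (A B Ahat : Matrix (Fin m) (Fin n) ℝ)
    (hB : B.rank = k)
    (hAhat_rank : Ahat.rank ≤ k)
    (hAhat_best : ∀ C : Matrix (Fin m) (Fin n) ℝ, C.rank ≤ k →
      (∑ i, ∑ j, (A i j - Ahat i j) ^ 2) ≤ ∑ i, ∑ j, (A i j - C i j) ^ 2) :
    (∑ i, ∑ j, (Ahat i j - B i j) ^ 2) ≤ 5 * k * specNorm (A - B) ^ 2 := by
  classical
  set t := specNorm (A - B) with htdef
  have ht0 : 0 ≤ t := specNorm_nonneg _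
  have ht : ∀ y : Fin n → ℝ, ‖toE ((A - B).mulVec y)‖ ≤ t * ‖toE y‖ :=
    fun y => specNorm_bound (A - B) y
  have hspec := spec_bound_of_best A B Ahat hB hAhat_rank hAhat_best ht0 ht
  set U := colspace Ahat with hU
  have hcol := align A Ahat hAhat_rank hAhat_best
  have hAhat_eq : Ahat = projCols U A := by
    funext i j
    exact congrArg (fun v : Euc m => v i) (hcol j)
  have hPmul : ∀ y : Fin n → ℝ,
      toE (Ahat.mulVec y) = (orthogonalProjection U (toE (A.mulVec y)) : Euc m) := by
    intro y
    conv_lhs => rw [hAhat_eq]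
    exact projCols_mulVec U A y
  set M1 : Matrix (Fin m) (Fin n) ℝ := projCols U (A - B) with hM1
  set M2 : Matrix (Fin m) (Fin n) ℝ := fun i j => B i j - projCols U B i j with hM2
  -- entrywise split
  have hsplit : ∀ i j, Ahat i j - B i j = M1 i j - M2 i j := by
    intro i j
    have h1 : M1 i j = (orthogonalProjection U (toE (fun i' => A i' j)) : Euc m) i
        - (orthogonalProjection U (toE (fun i' => B i' j)) : Euc m) i := by
      rw [hM1]
      show (orthogonalProjection U (toE (fun i' => (A - B) i' j)) : Euc m) i = _
      have he : toE (fun i' => (A - B) i' j)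
          = toE (fun i' => A i' j) - toE (fun i' => B i' j) := rfl
      rw [he, map_sub]
      rfl
    have h2 : Ahat i j = (orthogonalProjection U (toE (fun i' => A i' j)) : Euc m) i :=
      congrArg (fun v : Euc m => v i) (hcol j)
    have h3 : M2 i j = B i j
        - (orthogonalProjection U (toE (fun i' => B i' j)) : Euc m) i := rfl
    rw [h1, h2, h3]
    ring
  -- orthogonal decomposition of the Frobenius norm
  have hcolM1 : ∀ j, toE (fun i => M1 i j) ∈ U := by
    intro j
    rw [hM1, projCols_col]
    exact SetLike.coe_mem _
  have hcolM2 : ∀ j, toE (fun i => M2 i j) ∈ Uᗮ := by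
    intro j
    have he : toE (fun i => M2 i j)
        = toE (fun i' => B i' j) - (orthogonalProjection U (toE (fun i' => B i' j)) : Euc m) := by
      rw [hM2]
      rfl
    rw [he]
    exact sub_starProjection_mem_orthogonal _
  have hLHS : (∑ i, ∑ j, (Ahat i j - B i j) ^ 2)
      = (∑ i, ∑ j, M1 i j ^ 2) + (∑ i, ∑ j, M2 i j ^ 2) := by
    have e1 : (∑ i, ∑ j, (Ahat i j - B i j) ^ 2) = ∑ i, ∑ j, (M1 i j - M2 i j) ^ 2 :=
      Finset.sum_congr rfl fun i _ => Finset.sum_congr rfl fun j _ => by rw [hsplit i j]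
    rw [e1, frob_sub_eq, frob_eq_sum_cols M1, frob_eq_sum_cols M2, ← Finset.sum_add_distrib]
    refine Finset.sum_congr rfl fun j _ => ?_
    have hinner : ⟪toE (fun i => M1 i j), toE (fun i => M2 i j)⟫ = (0:ℝ) :=
      Submodule.inner_right_of_mem_orthogonal (hcolM1 j) (hcolM2 j)
    rw [norm_sub_sq_real, hinner]
    ring
  -- bound for M1
  have hb1 : (∑ i, ∑ j, M1 i j ^ 2) ≤ (k:ℝ) * t ^ 2 := by
    apply frob_le_rank_mul_sq
    · refine le_trans (rank_le_finrank_of_cols_mem M1 U hcolM1) ?_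
      rw [hU, finrank_colspace_eq_rank]
      exact hAhat_rank
    · intro y
      rw [hM1, projCols_mulVec]
      exact le_trans (norm_proj_le U _) (ht y)
  -- bound for M2
  have hb2 : (∑ i, ∑ j, M2 i j ^ 2) ≤ (k:ℝ) * (2 * t) ^ 2 := by
    apply frob_le_rank_mul_sq
    · -- rank M2 ≤ k via image of column space of B
      set L : Euc m →ₗ[ℝ] Euc m :=
        (LinearMap.id : Euc m →ₗ[ℝ] Euc m)
          - U.subtype.comp (orthogonalProjection U).toLinearMap with hL
      have hLapp : ∀ v : Euc m, L v = v - (orthogonalProjection U v : Euc m) := by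
        intro v
        rw [hL]
        simp [LinearMap.sub_apply]
      have hmem : ∀ j, toE (fun i => M2 i j) ∈ (colspace B).map L := by
        intro j
        refine ⟨toE (fun i' => B i' j), col_mem_colspace B j, ?_⟩
        rw [hLapp]
        rfl
      refine le_trans (rank_le_finrank_of_cols_mem M2 _ hmem) ?_
      refine le_trans (Submodule.finrank_map_le L (colspace B)) ?_
      rw [finrank_colspace_eq_rank, hB]
    · intro y
      have hmul : toE (M2.mulVec y)
          = toE (B.mulVec y) - (orthogonalProjection U (toE (B.mulVec y)) : Euc m) := by
        have h1 : M2.mulVec y = B.mulVec y - (projCols U B).mulVec y := by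
          rw [hM2]
          rw [show (fun i j => B i j - projCols U B i j)
            = (B - projCols U B : Matrix (Fin m) (Fin n) ℝ) from rfl]
          rw [Matrix.sub_mulVec]
        rw [h1, toE_sub, projCols_mulVec]
      set a' := toE (A.mulVec y) with ha'
      set b' := toE (B.mulVec y) with hb'
      have hdecomp : b' - (orthogonalProjection U b' : Euc m)
          = ((b' - a') - (orthogonalProjection U (b' - a') : Euc m))
            + (a' - (orthogonalProjection U a' : Euc m)) := by
        rw [map_sub]
        push_cast
        abel
      have hterm2 : a' - (orthogonalProjection U a' : Euc m) = toE ((A - Ahat).mulVec y) := by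
        rw [Matrix.sub_mulVec, toE_sub, hPmul y, ha']
      have hba : b' - a' = - toE ((A - B).mulVec y) := by
        rw [Matrix.sub_mulVec, toE_sub, ha', hb']
        abel
      rw [hmul, hdecomp]
      refine le_trans (norm_add_le _ _) ?_
      have hbd1 : ‖(b' - a') - (orthogonalProjection U (b' - a') : Euc m)‖ ≤ t * ‖toE y‖ := by
        refine le_trans (norm_sub_proj_le U _) ?_
        rw [hba, norm_neg]
        exact ht y
      have hbd2 : ‖a' - (orthogonalProjection U a' : Euc m)‖ ≤ t * ‖toE y‖ := by
        rw [hterm2]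
        exact hspec y
      calc ‖(b' - a') - (orthogonalProjection U (b' - a') : Euc m)‖
            + ‖a' - (orthogonalProjection U a' : Euc m)‖
          ≤ t * ‖toE y‖ + t * ‖toE y‖ := add_le_add hbd1 hbd2
        _ = 2 * t * ‖toE y‖ := by ring
  rw [hLHS]
  have : (k:ℝ) * t ^ 2 + (k:ℝ) * (2 * t) ^ 2 = 5 * k * t ^ 2 := by ring
  linarith [hb1, hb2]
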